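/- Let S be an (M,λ,ε)-minimizing set with λ > 1 and 0 ≤ ε < λ−1, and let [u] ∈ S. Then every Out(F_N)-minimal element of the orbit Out(F_N)[u] belongs to S; in particular the set M([u]) of Out(F_N)-minimal elements in the orbit has cardinality at most M. -/
import Mathlib


/-- `(M,λ,ε)`-minimizing set, in the abstract model where `G = Out(F_N)` acts
on the set `C` of conjugacy classes and `len = ‖·‖_A`. -/
def IsMinimizingSet (G : Type*) {C : Type*} [Group G] [MulAction G C]
    (len : C → ℕ) (M : ℕ) (lam eps : ℝ) (S : Finset C) : Prop :=
  (∀ u ∈ S, 0 < len u) ∧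
  S.card ≤ M ∧
  (∀ u ∈ S, ∀ u' ∈ S, ∃ φ : G, φ • u = u') ∧
  (∀ u ∈ S, ∀ u' ∈ S,
      (1 - eps) * (len u : ℝ) ≤ (len u' : ℝ) ∧ (len u' : ℝ) ≤ (1 + eps) * (len u : ℝ)) ∧
  (∀ u ∈ S, ∀ φ : G, φ • u ∉ S → lam * (len u : ℝ) ≤ (len (φ • u) : ℝ))

/-- `[u]` is `Out(F_N)`-minimal if no element of `Out(F_N)` decreases its
(cyclically reduced) length. -/
def IsOutMinimal (G : Type*) {C : Type*} [Group G] [MulAction G C]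
    (len : C → ℕ) (u : C) : Prop :=
  ∀ φ : G, len u ≤ len (φ • u)

/-- if `S` is `(M,λ,ε)`-minimizing and `[u] ∈ S`, then every
`Out(F_N)`-minimal element of the orbit of `[u]` lies in `S`; in particular the
set `M([u])` of minimal elements of the orbit has at most `M` elements. -/
theorem stmt3 {G C : Type*} [Group G] [MulAction G C]
    (len : C → ℕ) (M : ℕ) (lam eps : ℝ)
    (hM : 1 ≤ M) (hlam : 1 < lam) (heps0 : 0 ≤ eps) (heps : eps < lam - 1)
    (S : Finset C) (hS : IsMinimizingSet G len M lam eps S)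
    (u : C) (hu : u ∈ S) :
    {u' : C | (∃ φ : G, φ • u = u') ∧ IsOutMinimal G len u'} ⊆ (S : Set C) ∧
      Set.ncard {u' : C | (∃ φ : G, φ • u = u') ∧ IsOutMinimal G len u'} ≤ M := by
  obtain ⟨hpos, hcard, _, _, hlast⟩ := hS
  have hsub : {u' : C | (∃ φ : G, φ • u = u') ∧ IsOutMinimal G len u'} ⊆ (S : Set C) := by
    rintro u' ⟨⟨φ, rfl⟩, hmin⟩
    by_contra hns
    have h1 : lam * (len u : ℝ) ≤ (len (φ • u) : ℝ) := hlast u hu φ hns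
    have h2 : len (φ • u) ≤ len u := by
      have := hmin φ⁻¹
      simpa using this
    have h3 : (len (φ • u) : ℝ) ≤ (len u : ℝ) := by exact_mod_cast h2
    have h4 : 0 < (len u : ℝ) := by exact_mod_cast hpos u hu
    nlinarith
  refine ⟨hsub, ?_⟩
  calc Set.ncard {u' : C | (∃ φ : G, φ • u = u') ∧ IsOutMinimal G len u'}
      ≤ Set.ncard (S : Set C) := Set.ncard_le_ncard hsub S.finite_toSet
    _ = S.card := by simp
    _ ≤ M := hcard
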